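/- For the bit-reversal sequence e_k = exp(iπ Σ_j a_j 2^{−j}) (where k = Σ_j a_j 2^j in binary), the first 2^n terms {e_0, …, e_{2^n − 1}} equal, as sets, the set of all 2^n-th roots of unity. -/

import Mathlib

/-- The bit-reversal (Van der Corput) Leja sequence on the unit circle:
`e k = exp(iπ Σ_j a_j 2^{-j})` where `k = Σ_j a_j 2^j` in binary. -/
noncomputable def e (k : ℕ) : ℂ :=
  Complex.exp (Real.pi * Complex.I *
    ∑ j ∈ Finset.range (k + 1), if k.testBit j then ((1 : ℂ) / 2) ^ j else 0)

open Finset Complex in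
private lemma Ssum_stable (k : ℕ) {N : ℕ} (h : k + 1 ≤ N) :
    ∑ j ∈ range N, (if k.testBit j then ((1:ℂ)/2)^j else 0)
      = ∑ j ∈ range (k+1), (if k.testBit j then ((1:ℂ)/2)^j else 0) := by
  refine (Finset.sum_subset (Finset.range_subset_range.mpr h) ?_).symm
  intro j _ hj
  simp only [Finset.mem_range, not_lt] at hj
  have hk : k < 2 ^ j :=
    (show k < 2 ^ k from Nat.lt_two_pow_self).trans_le (Nat.pow_le_pow_right (by norm_num) (by omega))
  rw [Nat.testBit_lt_two_pow hk]
  simp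

open Finset Complex in
private lemma Ssum_even (k : ℕ) :
    ∑ j ∈ range (2*k+1), (if (2*k).testBit j then ((1:ℂ)/2)^j else 0)
      = (1/2) * ∑ j ∈ range (k+1), (if k.testBit j then ((1:ℂ)/2)^j else 0) := by
  rw [← Ssum_stable (2*k) (N := 2*k+2) (by omega), Finset.sum_range_succ']
  have h0 : (2*k).testBit 0 = false := by simp [Nat.testBit_zero, Nat.mul_mod_right]
  rw [h0]
  simp only [Bool.false_eq_true, if_false, add_zero]
  rw [show (2*k+1) = (2*k) + 1 from rfl]
  rw [← Ssum_stable k (N := 2*k+1) (by omega), Finset.mul_sum]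
  apply Finset.sum_congr rfl
  intro j _
  rw [Nat.testBit_add_one, Nat.mul_div_cancel_left k (by norm_num)]
  split <;> ring

open Finset Complex in
private lemma Ssum_odd (k : ℕ) :
    ∑ j ∈ range (2*k+2), (if (2*k+1).testBit j then ((1:ℂ)/2)^j else 0)
      = 1 + (1/2) * ∑ j ∈ range (k+1), (if k.testBit j then ((1:ℂ)/2)^j else 0) := by
  rw [Finset.sum_range_succ']
  have h0 : (2*k+1).testBit 0 = true := by
    simp [Nat.testBit_zero, Nat.add_mul_mod_self_left, Nat.mul_add_mod]
  rw [h0]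
  simp only [if_true, pow_zero]
  rw [add_comm]
  congr 1
  rw [← Ssum_stable k (N := 2*k+1) (by omega), Finset.mul_sum]
  apply Finset.sum_congr rfl
  intro j _
  rw [Nat.testBit_add_one, show (2*k+1)/2 = k by omega]
  split <;> ring

private lemma e_even_sq (k : ℕ) : e (2*k) ^ 2 = e k := by
  unfold e
  rw [show 2*k+1 = 2*k+0+1 by ring] at *
  rw [← Complex.exp_nat_mul]
  rw [show (2*k+0+1) = 2*k+1 from rfl, Ssum_even k]
  congr 1
  push_cast
  ring

private lemma e_odd (k : ℕ) : e (2*k+1) = - e (2*k) := by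
  unfold e
  rw [show 2*k+1+1 = 2*k+2 from rfl, Ssum_odd k,
    show 2*k+0+1 = 2*k+1 from rfl, Ssum_even k]
  rw [mul_add, Complex.exp_add, mul_one, Complex.exp_pi_mul_I]
  ring

private lemma e_odd_sq (k : ℕ) : e (2*k+1) ^ 2 = e k := by
  rw [e_odd, neg_pow, e_even_sq]; ring

private lemma e_zero : e 0 = 1 := by
  unfold e
  simp

theorem e_image_eq_rootsOfUnity (n : ℕ) :
    e '' {k : ℕ | k < 2 ^ n} = {z : ℂ | z ^ (2 ^ n) = 1} := by
  induction n with
  | zero =>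
    ext z
    simp only [pow_zero, pow_one, Set.mem_image, Set.mem_setOf_eq]
    constructor
    · rintro ⟨k, hk, rfl⟩
      interval_cases k
      exact e_zero
    · rintro rfl
      exact ⟨0, by norm_num, e_zero⟩
  | succ n ih =>
    have hsq : ∀ z : ℂ, z ^ (2 ^ (n+1)) = (z ^ 2) ^ (2 ^ n) := by
      intro z
      rw [← pow_mul, pow_succ, mul_comm]
    ext z
    simp only [Set.mem_image, Set.mem_setOf_eq] at *
    constructor
    · rintro ⟨k, hk, rfl⟩
      rw [hsq]
      have hm : k / 2 < 2 ^ n := by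
        have := Nat.pow_succ 2 n
        omega
      have hek : e k ^ 2 = e (k / 2) := by
        rcases Nat.even_or_odd k with ⟨m, hm'⟩ | ⟨m, hm'⟩
        · subst hm'
          rw [show m + m = 2 * m by ring, e_even_sq, Nat.mul_div_cancel_left m (by norm_num)]
        · subst hm'
          rw [e_odd_sq, show (2*m+1)/2 = m by omega]
      rw [hek]
      have : e (k/2) ∈ e '' {k : ℕ | k < 2 ^ n} := ⟨k/2, hm, rfl⟩
      rw [ih] at this
      exact this
    · intro hz
      rw [hsq] at hz
      have : z ^ 2 ∈ {z : ℂ | z ^ (2^n) = 1} := hz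
      rw [← ih] at this
      obtain ⟨m, hm, hem⟩ := this
      have h2 : z ^ 2 = e (2*m) ^ 2 := by rw [e_even_sq]; exact hem.symm
      have : (z - e (2*m)) * (z + e (2*m)) = 0 := by linear_combination h2
      rcases mul_eq_zero.mp this with h | h
      · exact ⟨2*m, by simp only [Set.mem_setOf_eq] at hm ⊢; omega, by
          rw [sub_eq_zero] at h; exact h.symm⟩
      · refine ⟨2*m+1, by simp only [Set.mem_setOf_eq] at hm ⊢; rw [pow_succ]; omega, ?_⟩
        rw [e_odd]
        rw [add_eq_zero_iff_eq_neg] at h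
        exact h.symm ▸ rfl
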